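/- For integers s ≥ t ≥ 2, the strong metric dimension of the modular product of the stars K_{1,s} and K_{1,t} is dim_s(K_{1,s}⋄K_{1,t}) = st + s − 1 if t = 2, and dim_s(K_{1,s}⋄K_{1,t}) = st + s if t > 2. -/

import Mathlib

open SimpleGraph

/-- The closed neighborhood `N[v]` of a vertex. -/
def closedNbr {α : Type*} (G : SimpleGraph α) (v : α) : Set α :=
  insert v (G.neighborSet v)

/-- The modular product `G ⋄ H`. -/
def modularProduct {α β : Type*} (G : SimpleGraph α) (H : SimpleGraph β) :
    SimpleGraph (α × β) :=
  SimpleGraph.fromRel (fun x y =>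
    (x.1 = y.1 ∧ H.Adj x.2 y.2) ∨
    (G.Adj x.1 y.1 ∧ x.2 = y.2) ∨
    (G.Adj x.1 y.1 ∧ H.Adj x.2 y.2) ∨
    (x.1 ≠ y.1 ∧ x.2 ≠ y.2 ∧ ¬ G.Adj x.1 y.1 ∧ ¬ H.Adj x.2 y.2))

/-- `{g, g'}` is a `γ_G`-pair: the closed neighborhoods are disjoint and cover `V(G)`. -/
def gammaPair {α : Type*} (G : SimpleGraph α) (g g' : α) : Prop :=
  closedNbr G g ∩ closedNbr G g' = ∅ ∧ closedNbr G g ∪ closedNbr G g' = Set.univ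

/-- A universal vertex. -/
def IsUniversal {α : Type*} (G : SimpleGraph α) (v : α) : Prop :=
  closedNbr G v = Set.univ

/-- A complete graph: every two distinct vertices are adjacent. -/
def IsCompleteGraph {α : Type*} (G : SimpleGraph α) : Prop :=
  ∀ u v : α, u ≠ v → G.Adj u v

/-- `G` is a disjoint union of two cliques. -/
def TwoCliques {α : Type*} (G : SimpleGraph α) : Prop :=
  ∃ A B : Set α, A.Nonempty ∧ B.Nonempty ∧ A ∪ B = Set.univ ∧ A ∩ B = ∅ ∧
    (∀ u ∈ A, ∀ v ∈ A, u ≠ v → G.Adj u v) ∧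
    (∀ u ∈ B, ∀ v ∈ B, u ≠ v → G.Adj u v) ∧
    (∀ u ∈ A, ∀ v ∈ B, ¬ G.Adj u v)

/-- `u` and `v` are mutually maximally distant in `X`. -/
def MMD {α : Type*} (X : SimpleGraph α) (u v : α) : Prop :=
  (∀ w, X.Adj u w → X.edist w v ≤ X.edist u v) ∧
  (∀ w, X.Adj v w → X.edist w u ≤ X.edist u v)

/-- A strong resolving set of `X`. -/
def IsStrongResolvingSet {α : Type*} (X : SimpleGraph α) (S : Set α) : Prop :=
  ∀ u v : α, u ≠ v → ∃ w ∈ S,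
    X.dist u w = X.dist u v + X.dist v w ∨ X.dist v w = X.dist v u + X.dist u w

/-- The strong metric dimension of `X`. -/
noncomputable def sdim {α : Type*} (X : SimpleGraph α) : ℕ :=
  sInf {n | ∃ S : Set α, S.ncard = n ∧ IsStrongResolvingSet X S}

/-- The star `K_{1,n}`: the center is `none`, the leaves are `some i`. -/
def starGraph (n : ℕ) : SimpleGraph (Option (Fin n)) :=
  SimpleGraph.fromRel (fun u v => u = none ∧ v ≠ none)

/-- The vertex cover number `β(X)`. -/
noncomputable def vertexCoverNumber {γ : Type*} (X : SimpleGraph γ) : ℕ :=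
  sInf {n | ∃ C : Set γ, C.ncard = n ∧ ∀ u v, X.Adj u v → u ∈ C ∨ v ∈ C}


def starE {n : ℕ} (u v : Option (Fin n)) : Prop := u = v ∨ u = none ∨ v = none

lemma star_adj {n : ℕ} {u v : Option (Fin n)} :
    (_root_.starGraph n).Adj u v ↔ (u = none ∧ v ≠ none) ∨ (v = none ∧ u ≠ none) := by
  rw [_root_.starGraph, SimpleGraph.fromRel_adj]
  constructor
  · rintro ⟨_, h⟩; exact h
  · rintro (⟨h1, h2⟩ | ⟨h1, h2⟩)
    · exact ⟨by rintro rfl; exact h2 h1, Or.inl ⟨h1, h2⟩⟩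
    · exact ⟨by rintro rfl; exact h2 h1, Or.inr ⟨h1, h2⟩⟩

lemma adjX {s t : ℕ} {x y : Option (Fin s) × Option (Fin t)} :
    (modularProduct (_root_.starGraph s) (_root_.starGraph t)).Adj x y ↔
      x ≠ y ∧ (starE x.1 y.1 ↔ starE x.2 y.2) := by
  obtain ⟨g, h⟩ := x
  obtain ⟨g', h'⟩ := y
  rw [modularProduct, SimpleGraph.fromRel_adj]
  simp only [star_adj, starE, ne_eq, Prod.mk.injEq, not_and]
  rcases g with _ | i <;> rcases g' with _ | k <;> rcases h with _ | j <;> rcases h' with _ | l <;>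
    simp only [reduceCtorEq, Option.some.injEq, not_false_iff, not_true, ne_eq,
      false_and, and_false, true_and, and_true, false_or, or_false, not_not] <;>
    tauto

section dists
variable {s t : ℕ}

local notation "X" => modularProduct (_root_.starGraph s) (_root_.starGraph t)

lemma adj_center {y : Option (Fin s) × Option (Fin t)} (hy : y ≠ (none, none)) :
    (modularProduct (_root_.starGraph s) (_root_.starGraph t)).Adj (none, none) y := by
  rw [adjX]
  exact ⟨fun e => hy e.symm, by simp [starE]⟩

lemma reachX (u v : Option (Fin s) × Option (Fin t)) :
    (modularProduct (_root_.starGraph s) (_root_.starGraph t)).Reachable u v := by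
  have key : ∀ w, (modularProduct (_root_.starGraph s) (_root_.starGraph t)).Reachable w (none, none) := by
    intro w
    by_cases h : w = (none, none)
    · rw [h]
    · exact ((adj_center h).symm).reachable
  exact (key u).trans (key v).symm

lemma distX_le_two (u v : Option (Fin s) × Option (Fin t)) :
    (modularProduct (_root_.starGraph s) (_root_.starGraph t)).dist u v ≤ 2 := by
  by_cases huv : u = v
  · rw [huv, SimpleGraph.dist_self]; omega
  by_cases hadj : (modularProduct (_root_.starGraph s) (_root_.starGraph t)).Adj u v
  · calc (modularProduct (_root_.starGraph s) (_root_.starGraph t)).dist u v ≤ (hadj.toWalk).length :=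
        SimpleGraph.dist_le _
    _ ≤ 2 := by simp
  · have hu : u ≠ (none, none) := by
      rintro rfl; exact hadj (adj_center (fun e => huv e.symm))
    have hv : v ≠ (none, none) := by
      rintro rfl; exact hadj ((adj_center huv).symm)
    have hle := SimpleGraph.dist_le
      (SimpleGraph.Walk.cons ((adj_center hu).symm) (SimpleGraph.Walk.cons (adj_center hv) .nil))
    simpa using hle

lemma distX_eq_two {u v : Option (Fin s) × Option (Fin t)} (hne : u ≠ v)
    (hnadj : ¬ (modularProduct (_root_.starGraph s) (_root_.starGraph t)).Adj u v) :
    (modularProduct (_root_.starGraph s) (_root_.starGraph t)).dist u v = 2 := by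
  have h0 : 0 < (modularProduct (_root_.starGraph s) (_root_.starGraph t)).dist u v :=
    (reachX u v).pos_dist_of_ne hne
  have h1 : (modularProduct (_root_.starGraph s) (_root_.starGraph t)).dist u v ≠ 1 := by
    intro h1
    exact hnadj (SimpleGraph.dist_eq_one_iff_adj.mp h1)
  have h2 := distX_le_two (s := s) (t := t) u v
  omega

end dists

section srs
variable {s t : ℕ}

lemma srs_of_clique (I : Set (Option (Fin s) × Option (Fin t)))
    (hcl : I.Pairwise (modularProduct (_root_.starGraph s) (_root_.starGraph t)).Adj)
    (hwit : ∀ u ∈ I, ∀ v ∈ I, u ≠ v → ∃ w, w ∉ I ∧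
      ((¬ (modularProduct (_root_.starGraph s) (_root_.starGraph t)).Adj u w ∧ w ≠ u ∧
          (modularProduct (_root_.starGraph s) (_root_.starGraph t)).Adj v w) ∨
       (¬ (modularProduct (_root_.starGraph s) (_root_.starGraph t)).Adj v w ∧ w ≠ v ∧
          (modularProduct (_root_.starGraph s) (_root_.starGraph t)).Adj u w))) :
    IsStrongResolvingSet (modularProduct (_root_.starGraph s) (_root_.starGraph t)) Iᶜ := by
  intro u v huv
  by_cases hu : u ∈ I
  · by_cases hv : v ∈ I
    · obtain ⟨w, hwI, hcase⟩ := hwit u hu v hv huv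
      refine ⟨w, hwI, ?_⟩
      have hadj : (modularProduct (_root_.starGraph s) (_root_.starGraph t)).Adj u v := hcl hu hv huv
      rcases hcase with ⟨h1, h2, h3⟩ | ⟨h1, h2, h3⟩
      · left
        rw [distX_eq_two (Ne.symm h2) h1, SimpleGraph.dist_eq_one_iff_adj.mpr hadj,
          SimpleGraph.dist_eq_one_iff_adj.mpr h3]
      · right
        rw [distX_eq_two (Ne.symm h2) h1, SimpleGraph.dist_eq_one_iff_adj.mpr hadj.symm,
          SimpleGraph.dist_eq_one_iff_adj.mpr h3]
    · exact ⟨v, hv, Or.inl (by rw [SimpleGraph.dist_self]; omega)⟩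
  · exact ⟨u, hu, Or.inr (by rw [SimpleGraph.dist_self]; omega)⟩

lemma clique_of_srs (S : Set (Option (Fin s) × Option (Fin t)))
    (hS : IsStrongResolvingSet (modularProduct (_root_.starGraph s) (_root_.starGraph t)) S) :
    Sᶜ.Pairwise (modularProduct (_root_.starGraph s) (_root_.starGraph t)).Adj := by
  intro u hu v hv huv
  obtain ⟨w, hwS, hcase⟩ := hS u v huv
  have hwu : w ≠ u := fun e => hu (e ▸ hwS)
  have hwv : w ≠ v := fun e => hv (e ▸ hwS)
  by_contra hnadj
  have duv : (modularProduct (_root_.starGraph s) (_root_.starGraph t)).dist u v = 2 := distX_eq_two huv hnadj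
  have dvu : (modularProduct (_root_.starGraph s) (_root_.starGraph t)).dist v u = 2 :=
    distX_eq_two (Ne.symm huv) (fun h => hnadj h.symm)
  have h1 : 0 < (modularProduct (_root_.starGraph s) (_root_.starGraph t)).dist u w :=
    (reachX u w).pos_dist_of_ne (Ne.symm hwu)
  have h2 : 0 < (modularProduct (_root_.starGraph s) (_root_.starGraph t)).dist v w :=
    (reachX v w).pos_dist_of_ne (Ne.symm hwv)
  have h3 := distX_le_two (s := s) (t := t) u w
  have h4 := distX_le_two (s := s) (t := t) v w
  rcases hcase with h | h <;> omega
end srs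

lemma clique_card {s t : ℕ} (T : Set (Option (Fin s) × Option (Fin t)))
    (hT : T.Pairwise (modularProduct (_root_.starGraph s) (_root_.starGraph t)).Adj) :
    T.ncard ≤ max 4 (t + 1) := by
  by_cases hR : ∃ i j k l, (some i, some j) ∈ T ∧ (some k, some l) ∈ T ∧ j ≠ l
  · obtain ⟨i, j, k, l, hp, hq, hjl⟩ := hR
    have hne : ((some i, some j) : Option (Fin s) × Option (Fin t)) ≠ (some k, some l) := by
      simp only [ne_eq, Prod.mk.injEq, Option.some.injEq, not_and]
      intro _ e; exact hjl e
    have hadj := hT hp hq hne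
    rw [adjX] at hadj
    have hik : i ≠ k := by
      obtain ⟨-, hiff⟩ := hadj
      simp only [starE, Option.some.injEq, reduceCtorEq, or_false] at hiff
      intro e; exact hjl (hiff.mp e)
    have hP : ∀ m, ((none, some m) : Option (Fin s) × Option (Fin t)) ∉ T := by
      intro m hm
      have h1 := hT hm hp (by simp)
      have h2 := hT hm hq (by simp)
      rw [adjX] at h1 h2
      simp only [starE, Option.some.injEq, reduceCtorEq, or_false, or_false, false_or,
        true_or, true_iff] at h1 h2
      obtain ⟨-, e1⟩ := h1
      obtain ⟨-, e2⟩ := h2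
      exact hjl (e1.symm.trans e2)
    have hQ : ∀ m, ((some m, none) : Option (Fin s) × Option (Fin t)) ∉ T := by
      intro m hm
      have h1 := hT hm hp (by simp)
      have h2 := hT hm hq (by simp)
      rw [adjX] at h1 h2
      simp only [starE, Option.some.injEq, reduceCtorEq, or_false, false_or,
        true_or, iff_true] at h1 h2
      obtain ⟨-, e1⟩ := h1
      obtain ⟨-, e2⟩ := h2
      exact hik (e1.symm.trans e2)
    have hinj : Set.InjOn Prod.snd T := by
      rintro ⟨x1, x2⟩ hx ⟨y1, y2⟩ hy hxy
      simp only at hxy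
      by_contra hne2
      have hadj2 := hT hx hy hne2
      rw [adjX] at hadj2
      obtain ⟨hne3, hiff⟩ := hadj2
      have hE1 : starE x1 y1 := hiff.mpr (Or.inl hxy)
      rcases hE1 with he | he | he
      · exact hne2 (by rw [he, hxy])
      · subst he
        rcases hx2 : x2 with _ | m
        · subst hx2
          rcases y1 with _ | m'
          · exact hne2 (by rw [← hxy])
          · exact hQ m' (hxy ▸ hy)
        · exact hP m (hx2 ▸ hx)
      · subst he
        rcases hy2 : y2 with _ | m
        · subst hy2
          rcases x1 with _ | m'
          · exact hne2 (by rw [hxy])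
          · exact hQ m' (hxy ▸ hx)
        · exact hP m (hy2 ▸ hy)
    have hle := Set.ncard_le_ncard_of_injOn Prod.snd (fun a _ => Set.mem_univ a) hinj
      Set.finite_univ
    rw [Set.ncard_univ, Nat.card_eq_fintype_card] at hle
    simp only [Fintype.card_option, Fintype.card_fin] at hle
    omega
  · push_neg at hR
    have hinj : Set.InjOn (fun x : Option (Fin s) × Option (Fin t) => (x.1.isSome, x.2.isSome)) T := by
      rintro ⟨x1, x2⟩ hx ⟨y1, y2⟩ hy hfeq
      simp only [Prod.mk.injEq] at hfeq
      by_contra hne2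
      have hadj := hT hx hy hne2
      rw [adjX] at hadj
      obtain ⟨-, hiff⟩ := hadj
      rcases x1 with _ | i
      · have hy1 : y1 = none := by
          rcases y1 with _ | k
          · rfl
          · simp at hfeq
        subst hy1
        have h2 : starE x2 y2 := hiff.mp (Or.inl rfl)
        rcases h2 with h | h | h
        · exact hne2 (by rw [h])
        · subst h
          rcases y2 with _ | l
          · exact hne2 rfl
          · simp at hfeq
        · subst h
          rcases x2 with _ | j
          · exact hne2 rfl
          · simp at hfeq
      · rcases y1 with _ | k
        · simp at hfeq
        · have h2 : starE x2 y2 := by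
            rcases x2 with _ | j
            · rcases y2 with _ | l
              · exact Or.inl rfl
              · simp at hfeq
            · rcases y2 with _ | l
              · simp at hfeq
              · exact Or.inl (by rw [hR i j k l hx hy])
          have h1 : starE (some i) (some k) := hiff.mpr h2
          have hik : i = k := by
            rcases h1 with h | h | h
            · exact Option.some.inj h
            · exact nomatch h
            · exact nomatch h
          have hx2 : x2 = y2 := by
            rcases h2 with h | h | h
            · exact h
            · subst h
              rcases y2 with _ | l
              · rfl
              · simp at hfeq
            · subst h
              rcases x2 with _ | j
              · rfl
              · simp at hfeq
          exact hne2 (by rw [hik, hx2])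
    have hle := Set.ncard_le_ncard_of_injOn
      (fun x : Option (Fin s) × Option (Fin t) => (x.1.isSome, x.2.isSome))
      (fun a _ => Set.mem_univ _) hinj Set.finite_univ
    rw [Set.ncard_univ, Nat.card_eq_fintype_card] at hle
    simp only [Fintype.card_prod, Fintype.card_bool] at hle
    omega

lemma adjX' {s t : ℕ} {x y : Option (Fin s) × Option (Fin t)} (hne : x ≠ y)
    (h : starE x.1 y.1 ↔ starE x.2 y.2) :
    (modularProduct (_root_.starGraph s) (_root_.starGraph t)).Adj x y := adjX.mpr ⟨hne, h⟩

lemma nadjX {s t : ℕ} {x y : Option (Fin s) × Option (Fin t)}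
    (h : ¬ (starE x.1 y.1 ↔ starE x.2 y.2)) :
    ¬ (modularProduct (_root_.starGraph s) (_root_.starGraph t)).Adj x y := fun a => h (adjX.mp a).2

lemma card_V (s t : ℕ) : Nat.card (Option (Fin s) × Option (Fin t)) = (s+1)*(t+1) := by
  simp [Nat.card_eq_fintype_card]

lemma mem4 {s t : ℕ} (hs : 2 ≤ s) (ht : 2 ≤ t) :
    ∃ S : Set (Option (Fin s) × Option (Fin t)), S.ncard = (s+1)*(t+1) - 4 ∧
      IsStrongResolvingSet (modularProduct (_root_.starGraph s) (_root_.starGraph t)) S := by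
  have hs1 : 1 < s := hs
  have ht1 : 1 < t := ht
  set a0 : Fin s := ⟨0, by omega⟩ with ha0
  set a1 : Fin s := ⟨1, by omega⟩ with ha1
  set b0 : Fin t := ⟨0, by omega⟩ with hb0
  set b1 : Fin t := ⟨1, by omega⟩ with hb1
  set I : Set (Option (Fin s) × Option (Fin t)) :=
    {(none, none), (none, some b0), (some a0, none), (some a0, some b0)} with hI
  have hcl : I.Pairwise (modularProduct (_root_.starGraph s) (_root_.starGraph t)).Adj := by
    intro x hx y hy hne
    simp only [hI, Set.mem_insert_iff, Set.mem_singleton_iff] at hx hy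
    rcases hx with rfl | rfl | rfl | rfl <;> rcases hy with rfl | rfl | rfl | rfl <;>
      first
        | exact absurd rfl hne
        | exact adjX' hne (by simp [starE])
  have hwit : ∀ u ∈ I, ∀ v ∈ I, u ≠ v → ∃ w, w ∉ I ∧
      ((¬ (modularProduct (_root_.starGraph s) (_root_.starGraph t)).Adj u w ∧ w ≠ u ∧
          (modularProduct (_root_.starGraph s) (_root_.starGraph t)).Adj v w) ∨
       (¬ (modularProduct (_root_.starGraph s) (_root_.starGraph t)).Adj v w ∧ w ≠ v ∧
          (modularProduct (_root_.starGraph s) (_root_.starGraph t)).Adj u w)) := by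
    intro u hu v hv hne
    simp only [hI, Set.mem_insert_iff, Set.mem_singleton_iff] at hu hv
    have hne10s : a1 ≠ a0 := by simp [ha0, ha1, Fin.ext_iff]
    have hne10t : b1 ≠ b0 := by simp [hb0, hb1, Fin.ext_iff]
    have hne01s : a0 ≠ a1 := hne10s.symm
    have hne01t : b0 ≠ b1 := hne10t.symm
    rcases hu with rfl | rfl | rfl | rfl <;> rcases hv with rfl | rfl | rfl | rfl
    · exact absurd rfl hne
    -- (A,B)
    · exact ⟨(some a1, some b1), by simp [hI, hne10s, hne10t, hne01s, hne01t],
        Or.inr ⟨nadjX (by simp [starE, hne10t, hne01t]), by simp, adjX' (by simp) (by simp [starE])⟩⟩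
    -- (A,C)
    · exact ⟨(some a1, some b1), by simp [hI, hne10s, hne10t, hne01s, hne01t],
        Or.inr ⟨nadjX (by simp [starE, hne10s, hne01s]), by simp, adjX' (by simp) (by simp [starE])⟩⟩
    -- (A,D)
    · exact ⟨(some a0, some b1), by simp [hI, hne10t, hne01t],
        Or.inr ⟨nadjX (by simp [starE, hne10t, hne01t]), by simp [hne10t, hne01t], adjX' (by simp) (by simp [starE])⟩⟩
    -- (B,A)
    · exact ⟨(some a1, some b1), by simp [hI, hne10s, hne10t, hne01s, hne01t],
        Or.inl ⟨nadjX (by simp [starE, hne10t, hne01t]), by simp, adjX' (by simp) (by simp [starE])⟩⟩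
    · exact absurd rfl hne
    -- (B,C)
    · exact ⟨(some a1, some b0), by simp [hI, hne10s, hne01s],
        Or.inr ⟨nadjX (by simp [starE, hne10s, hne01s]), by simp, adjX' (by simp) (by simp [starE])⟩⟩
    -- (B,D)
    · exact ⟨(some a1, some b0), by simp [hI, hne10s, hne01s],
        Or.inr ⟨nadjX (by simp [starE, hne10s, hne01s]), by simp [hne10s, hne01s], adjX' (by simp) (by simp [starE])⟩⟩
    -- (C,A)
    · exact ⟨(some a1, some b1), by simp [hI, hne10s, hne10t, hne01s, hne01t],
        Or.inl ⟨nadjX (by simp [starE, hne10s, hne01s]), by simp, adjX' (by simp) (by simp [starE])⟩⟩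
    -- (C,B)
    · exact ⟨(some a1, some b0), by simp [hI, hne10s, hne01s],
        Or.inl ⟨nadjX (by simp [starE, hne10s, hne01s]), by simp, adjX' (by simp) (by simp [starE])⟩⟩
    · exact absurd rfl hne
    -- (C,D)
    · exact ⟨(some a1, some b1), by simp [hI, hne10s, hne10t, hne01s, hne01t],
        Or.inl ⟨nadjX (by simp [starE, hne10s, hne01s]), by simp [hne10s, hne01s],
          adjX' (by simp [hne10s, hne10t, hne01s, hne01t]) (by simp [starE, hne10s, hne10t, hne01s, hne01t])⟩⟩
    -- (D,A)
    · exact ⟨(some a0, some b1), by simp [hI, hne10t, hne01t],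
        Or.inl ⟨nadjX (by simp [starE, hne10t, hne01t]), by simp [hne10t, hne01t], adjX' (by simp) (by simp [starE])⟩⟩
    -- (D,B)
    · exact ⟨(some a1, some b0), by simp [hI, hne10s, hne01s],
        Or.inl ⟨nadjX (by simp [starE, hne10s, hne01s]), by simp [hne10s, hne01s], adjX' (by simp) (by simp [starE])⟩⟩
    -- (D,C)
    · exact ⟨(some a1, some b1), by simp [hI, hne10s, hne10t, hne01s, hne01t],
        Or.inr ⟨nadjX (by simp [starE, hne10s, hne01s]), by simp [hne10s, hne01s],
          adjX' (by simp [hne10s, hne10t, hne01s, hne01t]) (by simp [starE, hne10s, hne10t, hne01s, hne01t])⟩⟩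
    · exact absurd rfl hne
  have hcard : I.ncard = 4 := by
    have hd1 : b1 ≠ b0 := by simp [hb0, hb1, Fin.ext_iff]
    rw [hI, Set.ncard_insert_of_notMem (by simp), Set.ncard_insert_of_notMem (by simp),
      Set.ncard_insert_of_notMem (by simp), Set.ncard_singleton]
  refine ⟨Iᶜ, ?_, srs_of_clique I hcl hwit⟩
  have h2 := Set.ncard_add_ncard_compl I
  rw [card_V, hcard] at h2
  omega

lemma memT {s t : ℕ} (hts : t ≤ s) (ht : 2 ≤ t) :
    ∃ S : Set (Option (Fin s) × Option (Fin t)), S.ncard = (s+1)*(t+1) - (t+1) ∧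
      IsStrongResolvingSet (modularProduct (_root_.starGraph s) (_root_.starGraph t)) S := by
  have ht1 : 1 < t := ht
  set b0 : Fin t := ⟨0, by omega⟩ with hb0
  set b1 : Fin t := ⟨1, by omega⟩ with hb1
  set f : Fin t → Option (Fin s) × Option (Fin t) :=
    fun i => (some (Fin.castLE hts i), some i) with hf
  have hfinj : Function.Injective f := by
    intro a b e
    rw [hf] at e
    simp only [Prod.mk.injEq, Option.some.injEq] at e
    exact e.2
  set I : Set (Option (Fin s) × Option (Fin t)) := insert (none, none) (Set.range f) with hI
  have hcl : I.Pairwise (modularProduct (_root_.starGraph s) (_root_.starGraph t)).Adj := by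
    intro x hx y hy hne
    simp only [hI, Set.mem_insert_iff, Set.mem_range] at hx hy
    rcases hx with rfl | ⟨i, rfl⟩
    · rcases hy with rfl | ⟨k, rfl⟩
      · exact absurd rfl hne
      · exact adjX' hne (by simp [starE, hf])
    · rcases hy with rfl | ⟨k, rfl⟩
      · exact adjX' hne (by simp [starE, hf])
      · have hik : i ≠ k := fun e => hne (by rw [e])
        exact adjX' hne (by simp [starE, hf, Fin.castLE_inj, hik])
  have hwit : ∀ u ∈ I, ∀ v ∈ I, u ≠ v → ∃ w, w ∉ I ∧
      ((¬ (modularProduct (_root_.starGraph s) (_root_.starGraph t)).Adj u w ∧ w ≠ u ∧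
          (modularProduct (_root_.starGraph s) (_root_.starGraph t)).Adj v w) ∨
       (¬ (modularProduct (_root_.starGraph s) (_root_.starGraph t)).Adj v w ∧ w ≠ v ∧
          (modularProduct (_root_.starGraph s) (_root_.starGraph t)).Adj u w)) := by
    intro u hu v hv hne
    simp only [hI, Set.mem_insert_iff, Set.mem_range] at hu hv
    rcases hu with rfl | ⟨i, rfl⟩
    · rcases hv with rfl | ⟨i, rfl⟩
      · exact absurd rfl hne
      · -- (center, f i)
        set j : Fin t := if i = b0 then b1 else b0 with hj
        have hji : j ≠ i := by
          rw [hj]; split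
          · rename_i h; rw [h]; simp [hb0, hb1, Fin.ext_iff]
          · rename_i h; exact fun e => h e.symm
        refine ⟨(some (Fin.castLE hts i), some j), ?_, Or.inr ⟨?_, ?_, ?_⟩⟩
        · simp only [hI, Set.mem_insert_iff, Set.mem_range, not_or]
          constructor
          · simp
          · rintro ⟨k, hk⟩
            rw [hf] at hk
            simp only [Prod.mk.injEq, Option.some.injEq, Fin.castLE_inj] at hk
            exact hji (hk.2.symm.trans hk.1)
        · exact nadjX (by simp [starE, hf, hji.symm])
        · simp [hf, hji]
        · exact adjX' (by simp) (by simp [starE])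
    · rcases hv with rfl | ⟨k, rfl⟩
      · -- (f i, center)
        set j : Fin t := if i = b0 then b1 else b0 with hj
        have hji : j ≠ i := by
          rw [hj]; split
          · rename_i h; rw [h]; simp [hb0, hb1, Fin.ext_iff]
          · rename_i h; exact fun e => h e.symm
        refine ⟨(some (Fin.castLE hts i), some j), ?_, Or.inl ⟨?_, ?_, ?_⟩⟩
        · simp only [hI, Set.mem_insert_iff, Set.mem_range, not_or]
          constructor
          · simp
          · rintro ⟨k, hk⟩
            rw [hf] at hk
            simp only [Prod.mk.injEq, Option.some.injEq, Fin.castLE_inj] at hk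
            exact hji (hk.2.symm.trans hk.1)
        · exact nadjX (by simp [starE, hf, hji.symm])
        · simp [hf, hji]
        · exact adjX' (by simp) (by simp [starE])
      · -- (f i, f k)
        have hik : i ≠ k := fun e => hne (by rw [e])
        refine ⟨(none, some k), ?_, Or.inl ⟨?_, ?_, ?_⟩⟩
        · simp only [hI, Set.mem_insert_iff, Set.mem_range, not_or]
          constructor
          · simp
          · rintro ⟨m, hm⟩
            rw [hf] at hm
            simp at hm
        · exact nadjX (by simp [starE, hf, hik])
        · simp [hf]
        · exact adjX' (by simp [hf]) (by simp [starE, hf])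
  have hcard : I.ncard = t + 1 := by
    rw [hI, Set.ncard_insert_of_notMem (by simp [hf]), ← Set.image_univ,
      Set.ncard_image_of_injective _ hfinj, Set.ncard_univ, Nat.card_eq_fintype_card,
      Fintype.card_fin]
  refine ⟨Iᶜ, ?_, srs_of_clique I hcl hwit⟩
  have h2 := Set.ncard_add_ncard_compl I
  rw [card_V, hcard] at h2
  omega


/-- the strong metric dimension of the modular product of two stars. -/
theorem sdim_star_modularProduct_star (s t : ℕ) (hts : t ≤ s) (ht : 2 ≤ t) :
    (t = 2 → sdim (modularProduct (_root_.starGraph s) (_root_.starGraph t)) = s * t + s - 1) ∧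
    (2 < t → sdim (modularProduct (_root_.starGraph s) (_root_.starGraph t)) = s * t + s) := by
  have hs : 2 ≤ s := ht.trans hts
  have hlb : ∀ m ∈ {n | ∃ S : Set (Option (Fin s) × Option (Fin t)), S.ncard = n ∧
      IsStrongResolvingSet (modularProduct (_root_.starGraph s) (_root_.starGraph t)) S},
      (s+1)*(t+1) - max 4 (t+1) ≤ m := by
    rintro m ⟨S', hc, hsrs⟩
    have h1 := clique_card _ (clique_of_srs S' hsrs)
    have h2 := Set.ncard_add_ncard_compl S'
    rw [card_V] at h2
    omega
  constructor
  · rintro rfl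
    obtain ⟨S, hScard, hSsrs⟩ := mem4 hs (le_refl 2)
    have hmem : ((s+1)*(2+1) - 4) ∈ {n | ∃ S : Set (Option (Fin s) × Option (Fin 2)), S.ncard = n ∧
        IsStrongResolvingSet (modularProduct (_root_.starGraph s) (_root_.starGraph 2)) S} := ⟨S, hScard, hSsrs⟩
    have hval : sdim (modularProduct (_root_.starGraph s) (_root_.starGraph 2)) = (s+1)*(2+1) - 4 := by
      unfold sdim
      refine le_antisymm (Nat.sInf_le hmem) (le_csInf ⟨_, hmem⟩ ?_)
      intro b hb
      have := hlb b hb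
      simpa using this
    rw [hval]
    have h3 : (s+1)*(2+1) = 3*s+3 := by ring
    omega
  · intro ht3
    obtain ⟨S, hScard, hSsrs⟩ := memT hts ht
    have hmem : ((s+1)*(t+1) - (t+1)) ∈ {n | ∃ S : Set (Option (Fin s) × Option (Fin t)), S.ncard = n ∧
        IsStrongResolvingSet (modularProduct (_root_.starGraph s) (_root_.starGraph t)) S} := ⟨S, hScard, hSsrs⟩
    have hmax : max 4 (t+1) = t+1 := by omega
    have hval : sdim (modularProduct (_root_.starGraph s) (_root_.starGraph t)) = (s+1)*(t+1) - (t+1) := by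
      unfold sdim
      refine le_antisymm (Nat.sInf_le hmem) (le_csInf ⟨_, hmem⟩ ?_)
      intro b hb
      have := hlb b hb
      omega
    rw [hval]
    have h3 : (s+1)*(t+1) = s*t+s+t+1 := by ring
    omega
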